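/- Let F_n be the set of Dyck paths of size n (paths from (0,0) to (n,n) with north and east steps staying weakly above y=x) that contain no peak with even y-coordinate and no valley with odd x-coordinate. Then |F_n| = 0 if n is even, and |F_n| = C_k (the k-th Catalan number) if n = 2k+1. -/

import Mathlib

/-- A Dyck path of size `n`: a list of booleans (`true` = north step, `false` = east step)
from `(0,0)` to `(n,n)` staying weakly above the diagonal `y = x`. -/
def IsDyckPath (n : ℕ) (w : List Bool) : Prop :=
  w.length = 2 * n ∧ w.count true = n ∧
    ∀ k, (w.take k).count false ≤ (w.take k).count true

/-- The `y`-coordinate of the lattice point reached after `k` steps. -/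
def ycoord (w : List Bool) (k : ℕ) : ℕ := (w.take k).count true

/-- The `x`-coordinate of the lattice point reached after `k` steps. -/
def xcoord (w : List Bool) (k : ℕ) : ℕ := (w.take k).count false

/-- A peak: a north step at position `i` followed by an east step. -/
def IsPeak (w : List Bool) (i : ℕ) : Prop := w[i]? = some true ∧ w[i+1]? = some false

/-- A valley: an east step at position `i` followed by a north step. -/
def IsValley (w : List Bool) (i : ℕ) : Prop := w[i]? = some false ∧ w[i+1]? = some true

/-- Height above the diagonal after `k` steps. -/
def pdepth (w : List Bool) (k : ℕ) : ℤ := (ycoord w k : ℤ) - (xcoord w k : ℤ)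

/-- Step `i` (a north step) of `w` is matched with step `j` (an east step):
the facing east step at the same height (balanced-parentheses matching). -/
def Matches (w : List Bool) (i j : ℕ) : Prop :=
  i < j ∧ w[i]? = some true ∧ w[j]? = some false ∧
    pdepth w (j + 1) = pdepth w i ∧ ∀ k, i < k → k ≤ j → pdepth w i < pdepth w k

/-- The graph on `m` points whose edges are the upper arches and the lower arches;
its connected components are the components of the corresponding meander. -/
def meanderGraph (m : ℕ) (upper lower : ℕ → ℕ → Prop) : SimpleGraph (Fin m) where
  Adj i j := i ≠ j ∧ (upper i.1 j.1 ∨ upper j.1 i.1 ∨ lower i.1 j.1 ∨ lower j.1 i.1)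
  symm := by
    constructor
    intro i j h
    exact ⟨h.1.symm, by tauto⟩
  loopless := by
    constructor
    intro i h
    exact h.1 rfl

/-- The number of components of the meander with the matching of `P` above and the
matching of `Q` below. -/
noncomputable def trajPQ (n : ℕ) (P Q : List Bool) : ℕ :=
  Nat.card (meanderGraph (2 * n) (Matches P) (Matches Q)).ConnectedComponent

/-- The number of components of the meander with the matching of `P` above and the
rainbow matching `i ↦ 2n - 1 - i` below. -/
noncomputable def traj (n : ℕ) (P : List Bool) : ℕ :=
  Nat.card (meanderGraph (2 * n) (Matches P)
    (fun i j => i + j + 1 = 2 * n)).ConnectedComponent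

/-- No peak with even `y`-coordinate and no valley with odd `x`-coordinate. -/
def NoBadCorner (w : List Bool) : Prop :=
  (∀ i, IsPeak w i → Odd (ycoord w (i + 1))) ∧
  (∀ i, IsValley w i → Even (xcoord w (i + 1)))

/-- A bad corner: a peak with even `y`-coordinate or a valley with odd `x`-coordinate. -/
def IsBadCorner (w : List Bool) (i : ℕ) : Prop :=
  (IsPeak w i ∧ Even (ycoord w (i + 1))) ∨ (IsValley w i ∧ Odd (xcoord w (i + 1)))

/-- Interchange the two steps of the corner at positions `i`, `i+1`. -/
def swapCorner (w : List Bool) (i : ℕ) : List Bool :=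
  (w.set i (w.getD (i + 1) true)).set (i + 1) (w.getD i true)

open Classical in
/-- The involution `φ`: swap the two steps of the first bad corner, if any. -/
noncomputable def phiMap (w : List Bool) : List Bool :=
  if h : ∃ i, IsBadCorner w i then swapCorner w (Nat.find h) else w

/-- The number of unit squares between a Dyck path and the diagonal `y = x`. -/
def area (w : List Bool) : ℕ :=
  ((List.range w.length).map fun i =>
    if w.getD i true then 0 else ycoord w i - xcoord w i - 1).sum

/-- The zigzag Dyck path `(NE)^m`. -/
def zigzag (m : ℕ) : List Bool := (List.replicate m [true, false]).flatten

/-- `N^{2a_1} E^{2b_1} ⋯ N^{2a_t} E^{2b_t}` for `ab = [(a_1,b_1),…,(a_t,b_t)]`. -/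
def doubledWord (ab : List (ℕ × ℕ)) : List Bool :=
  (ab.map fun p => List.replicate (2 * p.1) true ++ List.replicate (2 * p.2) false).flatten

/-- `N^{a_1} E^{b_1} ⋯ N^{a_t} E^{b_t}` for `ab = [(a_1,b_1),…,(a_t,b_t)]`. -/
def halfWord (ab : List (ℕ × ℕ)) : List Bool :=
  (ab.map fun p => List.replicate p.1 true ++ List.replicate p.2 false).flatten

/-- All peaks at odd height (`height` = `y - x` at the peak's lattice point). -/
def AllPeaksOdd (w : List Bool) : Prop :=
  ∀ i, IsPeak w i → Odd (ycoord w (i + 1) - xcoord w (i + 1))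

/-- All peaks at even height. -/
def AllPeaksEven (w : List Bool) : Prop :=
  ∀ i, IsPeak w i → Even (ycoord w (i + 1) - xcoord w (i + 1))

/-- Steps of a Motzkin path: up, horizontal, down. -/
inductive MStep | U | H | D
deriving DecidableEq

/-- The total height change along a list of Motzkin steps. -/
def msum (l : List MStep) : ℤ :=
  (l.map fun s => match s with | MStep.U => 1 | MStep.H => 0 | MStep.D => -1).sum

/-- A Motzkin path of length `n`. -/
def IsMotzkin (n : ℕ) (l : List MStep) : Prop :=
  l.length = n ∧ msum l = 0 ∧ ∀ k, 0 ≤ msum (l.take k)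

/-- A Riordan path of length `n`: a Motzkin path with no horizontal step on the `x`-axis. -/
def IsRiordan (n : ℕ) (l : List MStep) : Prop :=
  IsMotzkin n l ∧ ∀ i, l[i]? = some MStep.H → msum (l.take i) ≠ 0

/-- The map `φ_A` from Dyck paths of size `n+1` (all peaks at odd height)
to Motzkin paths of length `n`: `v_j` is read off from steps `p_{2j} p_{2j+1}`. -/
def phiA (n : ℕ) (P : List Bool) : List MStep :=
  (List.range n).map fun j =>
    match P.getD (2 * j + 1) true, P.getD (2 * j + 2) true with
    | true, true => MStep.U
    | false, true => MStep.H
    | _, _ => MStep.D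

/-- The map `φ_B` from Dyck paths of size `n` (all peaks at even height)
to Riordan paths of length `n`: `u_j` is read off from steps `p_{2j-1} p_{2j}`. -/
def phiB (n : ℕ) (P : List Bool) : List MStep :=
  (List.range n).map fun j =>
    match P.getD (2 * j) true, P.getD (2 * j + 1) true with
    | true, true => MStep.U
    | false, true => MStep.H
    | _, _ => MStep.D

section Aux

open List

/-! ### Doubling a word -/

/-- Double each letter of a word. -/
def dbl : List Bool → List Bool
  | [] => []
  | b :: l => b :: b :: dbl l

@[simp] lemma dbl_nil : dbl [] = [] := rfl

@[simp] lemma dbl_cons (b : Bool) (l : List Bool) : dbl (b :: l) = b :: b :: dbl l := rfl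

@[simp] lemma length_dbl (u : List Bool) : (dbl u).length = 2 * u.length := by
  induction u with
  | nil => rfl
  | cons b l ih => simp [ih]; omega

@[simp] lemma count_dbl (u : List Bool) (b : Bool) : (dbl u).count b = 2 * u.count b := by
  induction u with
  | nil => rfl
  | cons c l ih => cases c <;> cases b <;> simp [List.count_cons, ih] <;> omega

lemma dbl_injective : Function.Injective dbl := by
  intro u v h
  induction u generalizing v with
  | nil => cases v with
    | nil => rfl
    | cons c m => simp [dbl] at h
  | cons b l ih =>
    cases v with
    | nil => simp [dbl] at h
    | cons c m =>
      simp only [dbl_cons, List.cons.injEq] at h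
      obtain ⟨h1, -, h2⟩ := h
      rw [h1, ih h2]

lemma take_dbl_even : ∀ (j : ℕ) (u : List Bool), (dbl u).take (2 * j) = dbl (u.take j)
  | 0, _ => by simp
  | j + 1, [] => by simp
  | j + 1, b :: l => by
    rw [show 2 * (j + 1) = 2 * j + 1 + 1 by omega]
    simp [List.take_succ_cons, take_dbl_even j l]

lemma take_dbl_odd : ∀ (j : ℕ) (u : List Bool),
    (dbl u).take (2 * j + 1) = dbl (u.take j) ++ (u.drop j).take 1
  | 0, [] => by simp
  | 0, b :: l => by simp
  | j + 1, [] => by simp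
  | j + 1, b :: l => by
    rw [show 2 * (j + 1) + 1 = 2 * j + 1 + 1 + 1 by omega]
    simp [List.take_succ_cons, take_dbl_odd j l]

lemma getElem?_dbl_even : ∀ (j : ℕ) (u : List Bool), (dbl u)[2 * j]? = u[j]?
  | 0, [] => rfl
  | 0, b :: l => by simp
  | j + 1, [] => rfl
  | j + 1, b :: l => by
    rw [show 2 * (j + 1) = 2 * j + 1 + 1 by omega]
    simpa using getElem?_dbl_even j l

lemma getElem?_dbl_odd : ∀ (j : ℕ) (u : List Bool), (dbl u)[2 * j + 1]? = u[j]?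
  | 0, [] => rfl
  | 0, b :: l => by simp
  | j + 1, [] => rfl
  | j + 1, b :: l => by
    rw [show 2 * (j + 1) + 1 = 2 * j + 1 + 1 + 1 by omega]
    simpa using getElem?_dbl_odd j l

/-! ### Packing: `pack u = N (dbl u) E` -/

/-- `pack u = N · dbl u · E`. -/
def pack (u : List Bool) : List Bool := true :: (dbl u ++ [false])

@[simp] lemma length_pack (u : List Bool) : (pack u).length = 2 * u.length + 2 := by
  simp [pack]

@[simp] lemma count_pack_true (u : List Bool) : (pack u).count true = 2 * u.count true + 1 := by
  simp [pack, List.count_cons, List.count_append]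

@[simp] lemma count_pack_false (u : List Bool) : (pack u).count false = 2 * u.count false + 1 := by
  simp [pack, List.count_cons, List.count_append]

lemma pack_injective : Function.Injective pack := by
  intro u v h
  simp only [pack, List.cons.injEq, true_and] at h
  exact dbl_injective (List.append_cancel_right h)

lemma pack_take_odd {j : ℕ} {u : List Bool} (h : j ≤ u.length) :
    (pack u).take (2 * j + 1) = true :: dbl (u.take j) := by
  rw [pack, List.take_succ_cons, List.take_append, take_dbl_even,
    show 2 * j - (dbl u).length = 0 by simp; omega, List.take_zero, List.append_nil]

lemma pack_take_even {j : ℕ} {u : List Bool} (h : j < u.length) :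
    (pack u).take (2 * j + 2) = true :: (dbl (u.take j) ++ (u.drop j).take 1) := by
  rw [show 2 * j + 2 = (2 * j + 1) + 1 by omega, pack, List.take_succ_cons,
    List.take_append, take_dbl_odd,
    show 2 * j + 1 - (dbl u).length = 0 by simp; omega, List.take_zero, List.append_nil]

lemma ycoord_pack_odd {j : ℕ} {u : List Bool} (h : j ≤ u.length) :
    ycoord (pack u) (2 * j + 1) = 2 * (u.take j).count true + 1 := by
  rw [ycoord, pack_take_odd h]
  simp [List.count_cons]

lemma xcoord_pack_odd {j : ℕ} {u : List Bool} (h : j ≤ u.length) :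
    xcoord (pack u) (2 * j + 1) = 2 * (u.take j).count false := by
  rw [xcoord, pack_take_odd h]
  simp [List.count_cons]

@[simp] lemma pack_get_zero (u : List Bool) : (pack u)[0]? = some true := by simp [pack]

lemma pack_get_odd {j : ℕ} {u : List Bool} (h : j < u.length) :
    (pack u)[2 * j + 1]? = u[j]? := by
  rw [pack, List.getElem?_cons_succ]
  rw [List.getElem?_append, if_pos (by simp; omega), getElem?_dbl_even]

lemma pack_get_even {j : ℕ} {u : List Bool} (h : j < u.length) :
    (pack u)[2 * j + 2]? = u[j]? := by
  rw [show 2 * j + 2 = (2 * j + 1) + 1 by omega, pack, List.getElem?_cons_succ]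
  rw [List.getElem?_append, if_pos (by simp; omega), getElem?_dbl_odd]

lemma pack_get_last (u : List Bool) : (pack u)[2 * u.length + 1]? = some false := by
  rw [pack, List.getElem?_cons_succ]
  rw [List.getElem?_append_right (by simp)]
  simp

/-! ### Generic coordinate lemmas -/

lemma count_bool (l : List Bool) : l.count true + l.count false = l.length := by
  induction l with
  | nil => rfl
  | cons b l ih => cases b <;> simp [List.count_cons] <;> omega

lemma ycoord_succ_of {w : List Bool} {m : ℕ} {b : Bool} (h : w[m]? = some b) :
    ycoord w (m + 1) = ycoord w m + (if b then 1 else 0) := by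
  rw [ycoord, ycoord, List.take_succ, h]
  cases b <;> simp [List.count_append]

lemma xcoord_succ_of {w : List Bool} {m : ℕ} {b : Bool} (h : w[m]? = some b) :
    xcoord w (m + 1) = xcoord w m + (if b then 0 else 1) := by
  rw [xcoord, xcoord, List.take_succ, h]
  cases b <;> simp [List.count_append]

lemma coord_sum {w : List Bool} {m : ℕ} (h : m ≤ w.length) :
    ycoord w m + xcoord w m = m := by
  rw [ycoord, xcoord, count_bool, List.length_take]
  omega

lemma lt_of_getElem?_eq_some {l : List Bool} {m : ℕ} {b : Bool} (h : l[m]? = some b) :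
    m < l.length := by
  by_contra hc
  rw [List.getElem?_eq_none (by omega)] at h
  cases h

/-! ### `pack u` is a good Dyck path -/

lemma isDyckPath_pack {k : ℕ} {u : List Bool} (hu : IsDyckPath k u) :
    IsDyckPath (2 * k + 1) (pack u) := by
  obtain ⟨hl, hc, hp⟩ := hu
  have hcf : u.count false = k := by have := count_bool u; omega
  refine ⟨by simp [hl]; omega, by simp [hc], ?_⟩
  intro m
  match m with
  | 0 => simp
  | m + 1 =>
    by_cases hm : 2 * u.length + 1 ≤ m
    · rw [List.take_of_length_le (by simp; omega)]
      simp [hc, hcf]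
    · push_neg at hm
      rcases Nat.even_or_odd m with ⟨j, hj⟩ | ⟨j, hj⟩
      · have hjl : j ≤ u.length := by omega
        rw [show m + 1 = 2 * j + 1 by omega, pack_take_odd hjl]
        have := hp j
        simp [List.count_cons]
        omega
      · have hjl : j < u.length := by omega
        rw [show m + 1 = 2 * j + 2 by omega, pack_take_even hjl]
        have h1 := hp j
        have h2 : ((u.drop j).take 1).count false ≤ 1 :=
          le_trans List.count_le_length (by simp)
        simp [List.count_cons, List.count_append]
        omega

lemma noBadCorner_pack (u : List Bool) : NoBadCorner (pack u) := by
  constructor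
  · intro i hi
    obtain ⟨h1, h2⟩ := hi
    have hlt : i + 1 < 2 * u.length + 2 := by
      have := lt_of_getElem?_eq_some h2; simpa using this
    rcases Nat.even_or_odd i with ⟨j, hj⟩ | ⟨j, hj⟩
    · have hjl : j ≤ u.length := by omega
      rw [show i + 1 = 2 * j + 1 by omega, ycoord_pack_odd hjl]
      exact ⟨(u.take j).count true, by omega⟩
    · -- odd position: the two letters are equal, contradiction
      exfalso
      have hjl : j < u.length := by omega
      rw [show i = 2 * j + 1 by omega, pack_get_odd hjl] at h1
      rw [show i + 1 = 2 * j + 2 by omega, pack_get_even hjl] at h2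
      rw [h1] at h2
      exact Bool.noConfusion (Option.some.inj h2)
  · intro i hi
    obtain ⟨h1, h2⟩ := hi
    have hlt : i + 1 < 2 * u.length + 2 := by
      have := lt_of_getElem?_eq_some h2; simpa using this
    rcases Nat.even_or_odd i with ⟨j, hj⟩ | ⟨j, hj⟩
    · have hjl : j ≤ u.length := by omega
      rw [show i + 1 = 2 * j + 1 by omega, xcoord_pack_odd hjl]
      exact ⟨(u.take j).count false, by omega⟩
    · exfalso
      have hjl : j < u.length := by omega
      rw [show i = 2 * j + 1 by omega, pack_get_odd hjl] at h1
      rw [show i + 1 = 2 * j + 2 by omega, pack_get_even hjl] at h2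
      rw [h1] at h2
      exact Bool.noConfusion (Option.some.inj h2)

lemma isDyckPath_of_pack {k : ℕ} {u : List Bool} (h : IsDyckPath (2 * k + 1) (pack u)) :
    IsDyckPath k u := by
  obtain ⟨hl, hc, hp⟩ := h
  rw [length_pack] at hl
  rw [count_pack_true] at hc
  have hlen : u.length = 2 * k := by omega
  have hct : u.count true = k := by omega
  have hcf : u.count false = k := by have := count_bool u; omega
  refine ⟨hlen, hct, ?_⟩
  intro m
  by_cases hm : m ≤ u.length
  · have := hp (2 * m + 1)
    rw [pack_take_odd hm] at this
    simp only [List.count_cons, count_dbl] at this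
    simp at this ⊢
    omega
  · rw [List.take_of_length_le (by omega)]
    omega

/-! ### Every good Dyck path is a `pack` -/

section Forward

variable {n : ℕ} {w : List Bool}

lemma first_true (hw : IsDyckPath n w) (hn : 1 ≤ n) : w[0]? = some true := by
  have h0 : 0 < w.length := by rw [hw.1]; omega
  rcases hb0 : w[0]? with _ | b
  · exact absurd hb0 (by rw [List.getElem?_eq_getElem h0]; exact fun h => by cases h)
  · cases b
    · exfalso
      have := hw.2.2 1
      rw [List.take_succ, hb0] at this
      simp at this
    · rfl

lemma last_false (hw : IsDyckPath n w) (hn : 1 ≤ n) : w[2 * n - 1]? = some false := by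
  obtain ⟨hl, hc, hp⟩ := hw
  have hcf : w.count false = n := by have := count_bool w; omega
  have h0 : 2 * n - 1 < w.length := by omega
  rcases hb0 : w[2 * n - 1]? with _ | b
  · exact absurd hb0 (by rw [List.getElem?_eq_getElem h0]; exact fun h => by cases h)
  · cases b
    · rfl
    · exfalso
      have hfull : w.take (2 * n - 1 + 1) = w := List.take_of_length_le (by omega)
      have := hp (2 * n - 1)
      rw [List.take_succ, hb0] at hfull
      have hct : (w.take (2 * n - 1)).count true + 1 = n := by
        have := congrArg (fun l => List.count true l) hfull
        simpa [List.count_append, hc] using this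
      have hcff : (w.take (2 * n - 1)).count false = n := by
        have := congrArg (fun l => List.count false l) hfull
        simpa [List.count_append, hcf] using this
      omega

lemma pair_eq (hw : IsDyckPath n w) (hb : NoBadCorner w) {i : ℕ}
    (hy : Odd (ycoord w (2 * i + 1))) (hlt : 2 * i + 2 < 2 * n) :
    w[2 * i + 1]? = w[2 * i + 2]? := by
  have hl := hw.1
  have hb1 : 2 * i + 1 < w.length := by omega
  have hb2 : 2 * i + 2 < w.length := by omega
  rw [List.getElem?_eq_getElem hb1, List.getElem?_eq_getElem hb2]
  rcases h1 : w[2 * i + 1] with _ | _ <;> rcases h2 : w[2 * i + 2] with _ | _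
  · rfl
  · -- false then true : valley at 2i+1
    exfalso
    have hv : IsValley w (2 * i + 1) :=
      ⟨by rw [List.getElem?_eq_getElem hb1, h1], by
        rw [show 2 * i + 1 + 1 = 2 * i + 2 by omega, List.getElem?_eq_getElem hb2, h2]⟩
    have hev := hb.2 _ hv
    rw [show 2 * i + 1 + 1 = (2 * i + 1) + 1 by omega] at hev
    rw [xcoord_succ_of (by rw [List.getElem?_eq_getElem hb1, h1])] at hev
    have hsum : ycoord w (2 * i + 1) + xcoord w (2 * i + 1) = 2 * i + 1 :=
      coord_sum (by omega)
    obtain ⟨a, ha⟩ := hy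
    obtain ⟨c, hc⟩ := hev
    simp at hc
    omega
  · -- true then false : peak at 2i+1
    exfalso
    have hv : IsPeak w (2 * i + 1) :=
      ⟨by rw [List.getElem?_eq_getElem hb1, h1], by
        rw [show 2 * i + 1 + 1 = 2 * i + 2 by omega, List.getElem?_eq_getElem hb2, h2]⟩
    have hod := hb.1 _ hv
    rw [show 2 * i + 1 + 1 = (2 * i + 1) + 1 by omega] at hod
    rw [ycoord_succ_of (by rw [List.getElem?_eq_getElem hb1, h1])] at hod
    obtain ⟨a, ha⟩ := hy
    obtain ⟨c, hc⟩ := hod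
    simp at hc
    omega
  · rfl

lemma odd_y (hw : IsDyckPath n w) (hb : NoBadCorner w) (hn : 1 ≤ n) :
    ∀ i, 2 * i + 1 ≤ 2 * n → Odd (ycoord w (2 * i + 1)) := by
  intro i
  induction i with
  | zero =>
    intro _
    have h1 : ycoord w (0 + 1) = ycoord w 0 + 1 := by
      rw [ycoord_succ_of (first_true hw hn)]; simp
    have h0 : ycoord w 0 = 0 := by simp [ycoord]
    refine ⟨0, by simpa [h0] using h1⟩
  | succ i ih =>
    intro h
    have hprev : Odd (ycoord w (2 * i + 1)) := ih (by omega)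
    have hpair := pair_eq hw hb hprev (by omega)
    have hb1 : 2 * i + 1 < w.length := by rw [hw.1]; omega
    have hb2 : 2 * i + 2 < w.length := by rw [hw.1]; omega
    obtain ⟨b, hsome⟩ : ∃ b, w[2 * i + 1]? = some b :=
      ⟨w[2 * i + 1], List.getElem?_eq_getElem hb1⟩
    have hsome2 : w[2 * i + 2]? = some b := by rw [← hpair]; exact hsome
    have e1 : ycoord w (2 * i + 2) = ycoord w (2 * i + 1) + (if b then 1 else 0) := by
      rw [show 2 * i + 2 = (2 * i + 1) + 1 by omega]; exact ycoord_succ_of hsome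
    have e2 : ycoord w (2 * i + 3) = ycoord w (2 * i + 2) + (if b then 1 else 0) := by
      rw [show 2 * i + 3 = (2 * i + 2) + 1 by omega]; exact ycoord_succ_of hsome2
    rw [show 2 * (i + 1) + 1 = 2 * i + 3 by omega]
    obtain ⟨a, ha⟩ := hprev
    cases b
    · simp at e1 e2
      exact ⟨a, by omega⟩
    · simp at e1 e2
      exact ⟨a + 1, by omega⟩

lemma odd_n (hw : IsDyckPath n w) (hb : NoBadCorner w) (hn : 1 ≤ n) : Odd n := by
  have hy := odd_y hw hb hn (n - 1) (by omega)
  rw [show 2 * (n - 1) + 1 = 2 * n - 1 by omega] at hy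
  have hlast := last_false hw hn
  have e : ycoord w (2 * n) = ycoord w (2 * n - 1) + (if false then 1 else 0) := by
    rw [show 2 * n = (2 * n - 1) + 1 by omega]; exact ycoord_succ_of hlast
  have hfull : ycoord w (2 * n) = n := by
    rw [ycoord, List.take_of_length_le (by rw [hw.1])]; exact hw.2.1
  simp at e
  obtain ⟨a, ha⟩ := hy
  exact ⟨a, by omega⟩

lemma exists_pack (hw : IsDyckPath n w) (hb : NoBadCorner w) (hn : 1 ≤ n) :
    ∃ u, w = pack u := by
  refine ⟨(List.range (n - 1)).map (fun j => w.getD (2 * j + 1) true), ?_⟩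
  set u := (List.range (n - 1)).map (fun j => w.getD (2 * j + 1) true) with hu
  have hulen : u.length = n - 1 := by simp [hu]
  have hval : ∀ j, j < n - 1 → u[j]? = w[2 * j + 1]? := by
    intro j hj
    have hb1 : 2 * j + 1 < w.length := by rw [hw.1]; omega
    rw [hu, List.getElem?_map, List.getElem?_range hj]
    rw [List.getElem?_eq_getElem hb1]
    simp [List.getD_eq_getElem?_getD, List.getElem?_eq_getElem hb1]
  apply List.ext_getElem?
  intro i
  by_cases hbig : 2 * n ≤ i
  · rw [List.getElem?_eq_none (by rw [hw.1]; omega),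
      List.getElem?_eq_none (by rw [length_pack]; omega)]
  · push_neg at hbig
    match i with
    | 0 => rw [pack_get_zero]; exact first_true hw hn
    | i + 1 =>
      rcases Nat.even_or_odd i with ⟨j, hj⟩ | ⟨j, hj⟩
      · -- i + 1 = 2j + 1 odd
        by_cases hj2 : j < n - 1
        · rw [show i + 1 = 2 * j + 1 by omega, pack_get_odd (by omega), hval j hj2]
        · have hjn : j = n - 1 := by omega
          rw [show i + 1 = 2 * u.length + 1 by omega, pack_get_last,
            show 2 * u.length + 1 = 2 * n - 1 by omega]
          exact last_false hw hn
      · -- i + 1 = 2j + 2 even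
        have hj2 : j < n - 1 := by omega
        have hpair := pair_eq hw hb (odd_y hw hb hn j (by omega)) (by omega)
        rw [show i + 1 = 2 * j + 2 by omega, pack_get_even (by omega), hval j hj2]
        exact hpair.symm

end Forward

/-! ### Counting -/

/-- Bool to DyckStep. -/
def b2s : Bool → DyckStep := fun b => if b then DyckStep.U else DyckStep.D

/-- DyckStep to Bool. -/
def s2b : DyckStep → Bool := fun s => match s with | DyckStep.U => true | DyckStep.D => false

lemma b2s_injective : Function.Injective b2s := by
  intro a b h
  cases a <;> cases b <;> simp [b2s] at h ⊢

lemma s2b_injective : Function.Injective s2b := by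
  intro a b h
  cases a <;> cases b <;> simp [s2b] at h ⊢

@[simp] lemma s2b_b2s (l : List Bool) : (l.map b2s).map s2b = l := by
  rw [List.map_map]
  have : s2b ∘ b2s = id := by funext b; cases b <;> rfl
  rw [this, List.map_id]

@[simp] lemma b2s_s2b (l : List DyckStep) : (l.map s2b).map b2s = l := by
  rw [List.map_map]
  have : b2s ∘ s2b = id := by funext s; cases s <;> rfl
  rw [this, List.map_id]

lemma count_map_b2s_U (l : List Bool) : (l.map b2s).count DyckStep.U = l.count true :=
  List.count_map_of_injective l b2s b2s_injective true

lemma count_map_b2s_D (l : List Bool) : (l.map b2s).count DyckStep.D = l.count false :=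
  List.count_map_of_injective l b2s b2s_injective false

lemma count_map_s2b_true (l : List DyckStep) : (l.map s2b).count true = l.count DyckStep.U :=
  List.count_map_of_injective l s2b s2b_injective DyckStep.U

lemma count_map_s2b_false (l : List DyckStep) : (l.map s2b).count false = l.count DyckStep.D :=
  List.count_map_of_injective l s2b s2b_injective DyckStep.D

/-- Dyck paths of size `k` are equinumerous with Dyck words of semilength `k`. -/
noncomputable def dyckEquiv (k : ℕ) :
    {u : List Bool // IsDyckPath k u} ≃ {p : DyckWord // p.semilength = k} where
  toFun := fun ⟨u, hu⟩ =>
    ⟨⟨u.map b2s, by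
        rw [count_map_b2s_U, count_map_b2s_D, hu.2.1]
        have := count_bool u
        have h1 := hu.1
        have h2 := hu.2.1
        omega, by
        intro i
        rw [← List.map_take, count_map_b2s_U, count_map_b2s_D]
        exact hu.2.2 i⟩, by
      show (u.map b2s).count DyckStep.U = k
      rw [count_map_b2s_U, hu.2.1]⟩
  invFun := fun ⟨p, hp⟩ =>
    ⟨p.toList.map s2b, by
      have hlen : p.toList.length = 2 * k := by
        have := p.two_mul_semilength_eq_length
        omega
      refine ⟨by simpa using hlen, by rw [count_map_s2b_true]; exact hp, ?_⟩
      intro i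
      rw [← List.map_take, count_map_s2b_true, count_map_s2b_false]
      exact p.count_D_le_count_U i⟩
  left_inv := fun ⟨u, hu⟩ => Subtype.ext (s2b_b2s u)
  right_inv := fun ⟨p, hp⟩ => Subtype.ext (DyckWord.ext (b2s_s2b p.toList))

/-- Good Dyck paths of size `2k+1` are equinumerous with Dyck paths of size `k`. -/
noncomputable def goodEquiv (k : ℕ) :
    {u : List Bool // IsDyckPath k u} ≃
      {w : List Bool // IsDyckPath (2 * k + 1) w ∧ NoBadCorner w} := by
  apply Equiv.ofBijective
    (fun u => ⟨pack u.1, isDyckPath_pack u.2, noBadCorner_pack u.1⟩ :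
      {u : List Bool // IsDyckPath k u} →
        {w : List Bool // IsDyckPath (2 * k + 1) w ∧ NoBadCorner w})
  constructor
  · intro u v h
    exact Subtype.ext (pack_injective (congrArg Subtype.val h))
  · rintro ⟨w, hw, hb⟩
    obtain ⟨u, rfl⟩ := exists_pack hw hb (by omega)
    exact ⟨⟨u, isDyckPath_of_pack hw⟩, rfl⟩

end Aux

/-- The set of Dyck paths of size `n` with no bad corner has cardinality `0` if `n` is
even and the Catalan number `C_k` if `n = 2k+1`. -/
theorem fixed_point_count (n : ℕ) (hn : 1 ≤ n) :
    (Even n → Nat.card {w : List Bool // IsDyckPath n w ∧ NoBadCorner w} = 0) ∧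
    (∀ k : ℕ, n = 2 * k + 1 →
      Nat.card {w : List Bool // IsDyckPath n w ∧ NoBadCorner w} = catalan k) := by
  constructor
  · intro he
    have : IsEmpty {w : List Bool // IsDyckPath n w ∧ NoBadCorner w} := by
      constructor
      rintro ⟨w, hw, hb⟩
      exact (Nat.not_even_iff_odd.mpr (odd_n hw hb hn)) he
    exact Nat.card_of_isEmpty
  · intro k hk
    subst hk
    rw [Nat.card_congr ((dyckEquiv k).symm.trans (goodEquiv k)).symm,
      Nat.card_eq_fintype_card]
    exact DyckWord.card_dyckWord_semilength_eq_catalan k
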